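/- (Theorem 1, soft attention.) In the linear-orthogonal setting, fix α ∈ [0,1] and let μ : [0,∞) → ℝ be differentiable with μ(0) = 0 and μ'(t) = α / ( exp(α μ(t)) + C − 1 ) for all t ≥ 0. Then for every t ≥ 0 the fixed-focus soft-attention population loss L^{FF,SA}_α is Fréchet differentiable at W(t) := μ(t) D and (d/dt) W(t) = −∇ L^{FF,SA}_α(W(t)); that is, t ↦ μ(t) D is a gradient-flow trajectory of L^{FF,SA}_α started from the zero matrix, and each row of W(t) equals μ(t) ( s_k − (1/C) Σ_{k'=1}^C s_{k'} ). -/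

import Mathlib

open scoped RealInnerProductSpace BigOperators
open MeasureTheory

/-- Softmax of a finite family of reals. -/
noncomputable def softmax {ι : Type*} [Fintype ι] (z : ι → ℝ) (k : ι) : ℝ :=
  Real.exp (z k) / ∑ l, Real.exp (z l)


section Helpers

variable {d C : ℕ}

local notation "Esp" => EuclideanSpace ℝ (Fin d)
local notation "Vsp" => PiLp 2 fun _ : Fin C => EuclideanSpace ℝ (Fin d)

lemma piLp_norm_apply_le {ι : Type*} [Fintype ι] {β : ι → Type*}
    [∀ i, SeminormedAddCommGroup (β i)] (x : PiLp 2 β) (i : ι) : ‖x i‖ ≤ ‖x‖ := by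
  have h1 : ‖x i‖ ^ 2 ≤ ‖x‖ ^ 2 := by
    rw [PiLp.norm_sq_eq_of_L2]
    exact Finset.single_le_sum (f := fun l => ‖x l‖ ^ 2) (fun l _ => by positivity)
      (Finset.mem_univ i)
  nlinarith [norm_nonneg (x i), norm_nonneg x]

lemma sum_exp_pos {ι : Type*} [Fintype ι] [Nonempty ι] (z : ι → ℝ) :
    0 < ∑ l, Real.exp (z l) :=
  Finset.sum_pos (fun _ _ => Real.exp_pos _) Finset.univ_nonempty

lemma softmax_nonneg {ι : Type*} [Fintype ι] [Nonempty ι] (z : ι → ℝ) (k : ι) :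
    0 ≤ softmax z k :=
  div_nonneg (Real.exp_pos _).le (sum_exp_pos z).le

lemma sum_softmax {ι : Type*} [Fintype ι] [Nonempty ι] (z : ι → ℝ) :
    ∑ k, softmax z k = 1 := by
  simp only [softmax]
  rw [← Finset.sum_div, div_self (sum_exp_pos z).ne']

lemma neg_log_softmax {ι : Type*} [Fintype ι] [Nonempty ι] (z : ι → ℝ) (y : ι) :
    -Real.log (softmax z y) = Real.log (∑ l, Real.exp (z l)) - z y := by
  rw [softmax, Real.log_div (Real.exp_pos _).ne' (sum_exp_pos z).ne', Real.log_exp]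
  ring

noncomputable def phiCLM (v : Esp) (i : Fin C) : Vsp →L[ℝ] ℝ :=
  (innerSL ℝ v).comp (PiLp.proj 2 _ i)

@[simp] lemma phiCLM_apply (v : Esp) (i : Fin C) (W : Vsp) :
    phiCLM v i W = ⟪v, W i⟫ := rfl

noncomputable def TCLM (i : Fin C) : Esp →L[ℝ] (Vsp →L[ℝ] ℝ) :=
  (ContinuousLinearMap.apply ℝ (Vsp →L[ℝ] ℝ) (PiLp.proj 2 _ i)).comp
    ((ContinuousLinearMap.compL ℝ Vsp Esp ℝ).comp (innerSL ℝ))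

@[simp] lemma TCLM_apply (i : Fin C) (v : Esp) : TCLM i v = phiCLM v i := rfl

/-- The Fréchet derivative of `W ↦ -log softmax(⟪W·,v⟫) y`. -/
noncomputable def sfD (v : Esp) (y : Fin C) (W : Vsp) : Vsp →L[ℝ] ℝ :=
  ∑ i, (softmax (fun l => ⟪W l, v⟫) i - if i = y then (1 : ℝ) else 0) • phiCLM v i

lemma sfD_apply (v : Esp) (y : Fin C) (W U : Vsp) :
    sfD v y W U
      = ∑ i, (softmax (fun l => ⟪W l, v⟫) i - if i = y then (1 : ℝ) else 0) * ⟪v, U i⟫ := by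
  simp [sfD]

lemma hasFDerivAt_negLogSoftmax [NeZero C] (v : Esp) (y : Fin C) (W : Vsp) :
    HasFDerivAt (fun W : Vsp => -Real.log (softmax (fun i => ⟪W i, v⟫) y))
      (sfD v y W) W := by
  have hfun : (fun W : Vsp => -Real.log (softmax (fun i => ⟪W i, v⟫) y))
      = fun W : Vsp => Real.log (∑ l, Real.exp ⟪W l, v⟫) - ⟪W y, v⟫ :=
    funext fun W => neg_log_softmax _ y
  rw [hfun]
  have hinner : ∀ i : Fin C, HasFDerivAt (fun W : Vsp => ⟪W i, v⟫) (phiCLM v i) W := by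
    intro i
    have heq : (fun W : Vsp => ⟪W i, v⟫) = ⇑(phiCLM v i) :=
      funext fun W => (real_inner_comm _ _).trans (phiCLM_apply v i W).symm
    rw [heq]
    exact (phiCLM v i).hasFDerivAt
  have hsum : HasFDerivAt (fun W : Vsp => ∑ l, Real.exp ⟪W l, v⟫)
      (∑ l, Real.exp ⟪W l, v⟫ • phiCLM v l) W :=
    HasFDerivAt.fun_sum fun l _ => (hinner l).exp
  have hS : (0 : ℝ) < ∑ l, Real.exp ⟪W l, v⟫ := sum_exp_pos _
  have hlog := (hsum.log hS.ne').sub (hinner y)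
  refine HasFDerivAt.congr_fderiv hlog ?_
  symm
  ext U
  simp only [sfD, ContinuousLinearMap.coe_sum', Finset.sum_apply,
    ContinuousLinearMap.coe_smul', Pi.smul_apply, ContinuousLinearMap.coe_sub',
    Pi.sub_apply, smul_eq_mul, softmax]
  simp only [sub_mul]
  rw [Finset.sum_sub_distrib]
  congr 1
  · rw [Finset.mul_sum]
    refine Finset.sum_congr rfl fun i _ => ?_
    rw [div_mul_eq_mul_div, div_eq_inv_mul]
  · simp only [ite_mul, one_mul, zero_mul]
    rw [Finset.sum_ite_eq' Finset.univ y]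
    simp

lemma sfD_norm_le [NeZero C] (v : Esp) (y : Fin C) (W : Vsp) :
    ‖sfD v y W‖ ≤ 2 * ‖v‖ := by
  apply ContinuousLinearMap.opNorm_le_bound _ (by positivity)
  intro U
  rw [sfD_apply]
  calc |∑ i, (softmax (fun l => ⟪W l, v⟫) i - if i = y then (1:ℝ) else 0) * ⟪v, U i⟫|
      ≤ ∑ i, |(softmax (fun l => ⟪W l, v⟫) i - if i = y then (1:ℝ) else 0) * ⟪v, U i⟫| :=
        Finset.abs_sum_le_sum_abs _ _
    _ ≤ ∑ i, (softmax (fun l => ⟪W l, v⟫) i + if i = y then (1:ℝ) else 0) * (‖v‖ * ‖U‖) := by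
        apply Finset.sum_le_sum
        intro i _
        rw [abs_mul]
        apply mul_le_mul
        · have h0 := softmax_nonneg (fun l => ⟪W l, v⟫) i
          have he : (0:ℝ) ≤ if i = y then (1:ℝ) else 0 := by split <;> norm_num
          calc |softmax (fun l => ⟪W l, v⟫) i - if i = y then (1:ℝ) else 0|
              ≤ |softmax (fun l => ⟪W l, v⟫) i| + |if i = y then (1:ℝ) else 0| := abs_sub _ _
            _ = softmax (fun l => ⟪W l, v⟫) i + if i = y then (1:ℝ) else 0 := by
                rw [abs_of_nonneg h0, abs_of_nonneg he]
        · calc |⟪v, U i⟫| ≤ ‖v‖ * ‖U i‖ := abs_real_inner_le_norm _ _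
            _ ≤ ‖v‖ * ‖U‖ := by
                have := piLp_norm_apply_le U i
                exact mul_le_mul_of_nonneg_left this (norm_nonneg v)
        · exact abs_nonneg _
        · have h0 := softmax_nonneg (fun l => ⟪W l, v⟫) i
          split <;> linarith
    _ = (∑ i, (softmax (fun l => ⟪W l, v⟫) i + if i = y then (1:ℝ) else 0)) * (‖v‖ * ‖U‖) := by
        rw [Finset.sum_mul]
    _ = 2 * (‖v‖ * ‖U‖) := by
        rw [Finset.sum_add_distrib, sum_softmax]
        norm_num
    _ = 2 * ‖v‖ * ‖U‖ := by ring

end Helpers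

section Extra

variable {d C : ℕ}

local notation "Esp" => EuclideanSpace ℝ (Fin d)
local notation "Vsp" => PiLp 2 fun _ : Fin C => EuclideanSpace ℝ (Fin d)

lemma continuous_sfD [NeZero C] (y : Fin C) (W : Vsp) :
    Continuous fun v : Esp => sfD v y W := by
  have hc : ∀ l : Fin C, Continuous fun v : Esp => ⟪W l, v⟫ :=
    fun l => (innerSL ℝ (W l)).continuous
  apply continuous_finset_sum
  intro i _
  apply Continuous.fun_smul
  · simp only [softmax]
    apply Continuous.sub
    · apply Continuous.div
      · exact Real.continuous_exp.comp (hc i)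
      · exact continuous_finset_sum _ fun l _ => Real.continuous_exp.comp (hc l)
      · intro v; exact (sum_exp_pos _).ne'
    · exact continuous_const
  · exact (TCLM i).continuous

lemma softmax_affine [NeZero C] (y i : Fin C) (A B : ℝ) :
    softmax (fun l : Fin C => A * (if l = y then 1 else 0) + B) i
      = (if i = y then Real.exp A else 1) / (Real.exp A + (C : ℝ) - 1) := by
  have hnum : ∀ l : Fin C, Real.exp (A * (if l = y then 1 else 0) + B)
      = (if l = y then Real.exp A else 1) * Real.exp B := by
    intro l; split <;> simp [Real.exp_add]
  simp only [softmax, hnum]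
  rw [← Finset.sum_mul]
  have hsum : ∑ l : Fin C, (if l = y then Real.exp A else 1)
      = Real.exp A + (C : ℝ) - 1 := by
    have h1 : ∀ l : Fin C, (if l = y then Real.exp A else 1)
        = (if l = y then Real.exp A - 1 else 0) + 1 := by intro l; split <;> ring
    simp only [h1]
    rw [Finset.sum_add_distrib, Finset.sum_ite_eq' Finset.univ y]
    simp [Finset.card_univ]
    ring
  rw [hsum, mul_div_mul_right _ _ (Real.exp_ne_zero B)]

lemma measurePreserving_eval_pi {ι : Type*} [Fintype ι] {X : Type*} [MeasurableSpace X]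
    (ρ : Measure X) [IsProbabilityMeasure ρ] (j : ι) :
    MeasurePreserving (fun b : ι → X => b j) (Measure.pi fun _ => ρ) ρ := by
  classical
  refine ⟨measurable_pi_apply j, ?_⟩
  ext s hs
  rw [Measure.map_apply (measurable_pi_apply j) hs]
  have hpre : (fun b : ι → X => b j) ⁻¹' s
      = Set.pi Set.univ (Function.update (fun _ : ι => (Set.univ : Set X)) j s) :=
    Set.eval_preimage
  rw [hpre, Measure.pi_pi]
  rw [Finset.prod_eq_single j (fun i _ hij => by
    rw [Function.update_of_ne hij]; exact measure_univ) (by simp)]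
  rw [Function.update_self]

end Extra

set_option maxHeartbeats 1600000 in
set_option synthInstance.maxHeartbeats 4000000 in
/-- Theorem 1, soft attention: in the linear-orthogonal setting, `t ↦ μ(t) D`
is a gradient-flow trajectory (from the zero matrix) of the fixed-focus soft-attention
population loss, where `μ' = α / (exp(α μ) + C − 1)`. -/
theorem fixed_focus_soft_attention_gradient_flow
    (d C m : ℕ) (hd : 1 ≤ d) (hC : 2 ≤ C) (hm : 2 ≤ m)
    (s : Fin C → EuclideanSpace ℝ (Fin d)) (hs : Orthonormal ℝ s)
    (ρ : Measure (EuclideanSpace ℝ (Fin d))) [IsProbabilityMeasure ρ]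
    (hρ_int : Integrable (fun x => x) ρ)
    (hρ_mean : ∫ x, x ∂ρ = 0)
    (hρ_orth : ∀ᵐ x ∂ρ, ∀ k, ⟪x, s k⟫ = 0)
    (α : ℝ) (hα : α ∈ Set.Icc (0 : ℝ) 1)
    (D : PiLp 2 fun _ : Fin C => EuclideanSpace ℝ (Fin d))
    (hD : ∀ k, D k = s k - (C : ℝ)⁻¹ • ∑ k', s k')
    (μ : ℝ → ℝ) (hμ0 : μ 0 = 0)
    (hμ : ∀ t, 0 ≤ t → HasDerivAt μ (α / (Real.exp (α * μ t) + C - 1)) t)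
    (L : (PiLp 2 fun _ : Fin C => EuclideanSpace ℝ (Fin d)) → ℝ)
    (hL : ∀ W, L W = (C : ℝ)⁻¹ * ∑ y : Fin C,
      ∫ b : Fin (m - 1) → EuclideanSpace ℝ (Fin d),
        -Real.log (softmax (fun i =>
          ⟪W i, α • s y + ((1 - α) / ((m : ℝ) - 1)) • ∑ j, b j⟫) y)
        ∂(Measure.pi fun _ => ρ)) :
    ∀ t, 0 ≤ t → ∃ g, HasGradientAt L g (μ t • D) ∧
      HasDerivAt (fun τ => μ τ • D) (-g) t ∧
      ∀ k, (μ t • D) k = μ t • (s k - (C : ℝ)⁻¹ • ∑ k', s k') := by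
  classical
  intro t ht
  have hC0 : 0 < C := by omega
  haveI : NeZero C := ⟨hC0.ne'⟩
  haveI : Nonempty (Fin C) := ⟨⟨0, hC0⟩⟩
  set π : Measure (Fin (m - 1) → EuclideanSpace ℝ (Fin d)) := Measure.pi fun _ => ρ with hπ
  set v : Fin C → (Fin (m - 1) → EuclideanSpace ℝ (Fin d)) → EuclideanSpace ℝ (Fin d) :=
    fun y b => α • s y + ((1 - α) / ((m : ℝ) - 1)) • ∑ j, b j with hv
  set W₀ : PiLp 2 fun _ : Fin C => EuclideanSpace ℝ (Fin d) := μ t • D with hW₀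
  set S : ℝ := Real.exp (α * μ t) + C - 1 with hSdef
  have hCR : (2 : ℝ) ≤ (C : ℝ) := by exact_mod_cast hC
  have hS0 : 0 < S := by
    have := Real.exp_pos (α * μ t); rw [hSdef]; linarith
  refine ⟨(-(α / S)) • D, ?_, ?_, ?_⟩
  · -- gradient
    rw [hasGradientAt_iff_hasFDerivAt]
    -- basic facts about v
    have hvcont : ∀ y, Continuous (v y) := by
      intro y
      exact continuous_const.add
        ((continuous_finset_sum _ fun j _ => continuous_apply j).fun_const_smul _)
    have hmp : ∀ j : Fin (m - 1),
        MeasurePreserving (fun b : Fin (m - 1) → EuclideanSpace ℝ (Fin d) => b j) π ρ :=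
      fun j => measurePreserving_eval_pi ρ j
    have hint_eval : ∀ j, Integrable
        (fun b : Fin (m - 1) → EuclideanSpace ℝ (Fin d) => b j) π := by
      intro j
      have h1 : Integrable (id : EuclideanSpace ℝ (Fin d) → EuclideanSpace ℝ (Fin d))
          (π.map (fun b : Fin (m - 1) → EuclideanSpace ℝ (Fin d) => b j)) := by
        rw [(hmp j).map_eq]; exact hρ_int
      exact (integrable_map_measure aestronglyMeasurable_id
        (measurable_pi_apply j).aemeasurable).mp h1
    have hmean_eval : ∀ j, (∫ b : Fin (m - 1) → EuclideanSpace ℝ (Fin d), b j ∂π) = 0 := by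
      intro j
      have h2 : ∫ x, id x ∂(π.map (fun b : Fin (m - 1) → EuclideanSpace ℝ (Fin d) => b j))
          = ∫ b : Fin (m - 1) → EuclideanSpace ℝ (Fin d), id (b j) ∂π :=
        integral_map (measurable_pi_apply j).aemeasurable
          (by rw [(hmp j).map_eq]; exact aestronglyMeasurable_id)
      simp only [id] at h2
      rw [← h2, (hmp j).map_eq, hρ_mean]
    have hsum_int : Integrable (fun b : Fin (m - 1) → EuclideanSpace ℝ (Fin d) => ∑ j, b j) π :=
      integrable_finset_sum _ fun j _ => hint_eval j
    have hsmul_int : Integrable (fun b : Fin (m - 1) → EuclideanSpace ℝ (Fin d) =>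
        ((1 - α) / ((m : ℝ) - 1)) • ∑ j, b j) π := by
      exact hsum_int.smul ((1 - α) / ((m : ℝ) - 1))
    have hvint : ∀ y, Integrable (v y) π := by
      intro y
      exact (integrable_const _).add hsmul_int
    have hvmean : ∀ y, (∫ b, v y b ∂π) = α • s y := by
      intro y
      rw [hv]
      rw [integral_add (integrable_const _) hsmul_int]
      rw [integral_const, probReal_univ, one_smul]
      rw [integral_smul, integral_finset_sum _ fun j _ => hint_eval j]
      simp only [hmean_eval]
      simp
    have horth : ∀ᵐ b ∂π, ∀ j k, ⟪b j, s k⟫ = 0 := by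
      rw [ae_all_iff]
      intro j
      exact (MeasureTheory.Measure.tendsto_eval_ae_ae (μ := fun _ => ρ) (i := j)).eventually
        hρ_orth
    -- a.e. value of the logits at W₀
    have hz : ∀ y : Fin C, ∀ᵐ b ∂π, ∀ i : Fin C,
        ⟪W₀ i, v y b⟫ = (α * μ t) * (if i = y then 1 else 0) + (-(α * μ t * (C : ℝ)⁻¹)) := by
      intro y
      filter_upwards [horth] with b hb i
      have hWi : W₀ i = μ t • (s i - (C : ℝ)⁻¹ • ∑ k', s k') := by
        have : W₀ i = μ t • D i := rfl
        rw [this, hD i]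
      have hbs : ∀ j k, ⟪s k, b j⟫ = 0 := fun j k => by
        rw [real_inner_comm]; exact hb j k
      have hss := orthonormal_iff_ite.mp hs
      rw [hWi, hv]
      simp only [real_inner_smul_left, inner_add_right, inner_sub_left,
        real_inner_smul_right, inner_sum, sum_inner, hss, hbs,
        Finset.sum_ite_eq' Finset.univ, Finset.mem_univ, if_true,
        Finset.sum_const_zero, mul_zero, add_zero, smul_eq_mul]
      have hcount : ∑ k' : Fin C, (if k' = y then (1:ℝ) else 0) = 1 := by
        rw [Finset.sum_ite_eq' Finset.univ y]; simp
      split_ifs with h <;> · simp; ring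
    -- differentiability of each summand under the integral
    have hasfd : ∀ y : Fin C, HasFDerivAt
        (fun W : PiLp 2 fun _ : Fin C => EuclideanSpace ℝ (Fin d) =>
          ∫ b, -Real.log (softmax (fun i => ⟪W i, v y b⟫) y) ∂π)
        (∫ b, sfD (v y b) y W₀ ∂π) W₀ := by
      intro y
      have hFmeas : ∀ᶠ x in nhds W₀, AEStronglyMeasurable
          (fun b => -Real.log (softmax (fun i => ⟪x i, v y b⟫) y)) π := by
        refine Filter.Eventually.of_forall fun x => ?_
        have hfun : (fun b => -Real.log (softmax (fun i => ⟪x i, v y b⟫) y))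
            = fun b => Real.log (∑ l, Real.exp ⟪x l, v y b⟫) - ⟪x y, v y b⟫ :=
          funext fun b => neg_log_softmax _ y
        rw [hfun]
        have hic : ∀ l : Fin C, Continuous fun b => ⟪x l, v y b⟫ :=
          fun l => Continuous.inner continuous_const (hvcont y)
        exact (((continuous_finset_sum _ fun l _ => Real.continuous_exp.comp (hic l)).log
          (fun b => (sum_exp_pos _).ne')).sub (hic y)).aestronglyMeasurable
      have hFint : Integrable (fun b => -Real.log (softmax (fun i => ⟪W₀ i, v y b⟫) y)) π := by
        refine (integrable_const (-Real.log (softmax (fun i : Fin C =>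
          (α * μ t) * (if i = y then 1 else 0) + (-(α * μ t * (C : ℝ)⁻¹))) y))).congr ?_
        filter_upwards [hz y] with b hb
        have hfz : (fun i : Fin C => (α * μ t) * (if i = y then 1 else 0)
            + (-(α * μ t * (C : ℝ)⁻¹))) = fun i => ⟪W₀ i, v y b⟫ := funext fun i => (hb i).symm
        rw [hfz]
      have hF'meas : AEStronglyMeasurable (fun b => sfD (v y b) y W₀) π :=
        ((continuous_sfD y W₀).comp (hvcont y)).aestronglyMeasurable
      have hbound : ∀ᵐ b ∂π, ∀ x ∈ Metric.ball W₀ 1, ‖sfD (v y b) y x‖ ≤ 2 * ‖v y b‖ :=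
        Filter.Eventually.of_forall fun b x _ => sfD_norm_le _ y x
      have hbint : Integrable (fun b => 2 * ‖v y b‖) π := (hvint y).norm.const_mul 2
      have hdiff : ∀ᵐ b ∂π, ∀ x ∈ Metric.ball W₀ 1,
          HasFDerivAt (fun W : PiLp 2 fun _ : Fin C => EuclideanSpace ℝ (Fin d) =>
            -Real.log (softmax (fun i => ⟪W i, v y b⟫) y)) (sfD (v y b) y x) x :=
        Filter.Eventually.of_forall fun b x _ => hasFDerivAt_negLogSoftmax _ y x
      exact hasFDerivAt_integral_of_dominated_of_fderiv_le (Metric.ball_mem_nhds _ one_pos) hFmeas hFint hF'meas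
        hbound hbint hdiff
    -- value of each derivative integral
    have hAy : ∀ y : Fin C, (∫ b, sfD (v y b) y W₀ ∂π)
        = ∑ i, (((if i = y then Real.exp (α * μ t) else 1) / S - if i = y then 1 else 0) * α)
            • phiCLM (s y) i := by
      intro y
      have h1 : (fun b => sfD (v y b) y W₀) =ᵐ[π] fun b =>
          ∑ i, ((if i = y then Real.exp (α * μ t) else 1) / S - if i = y then 1 else 0)
            • TCLM i (v y b) := by
        filter_upwards [hz y] with b hb
        have hzf : (fun l : Fin C => ⟪W₀ l, v y b⟫)
            = fun l => (α * μ t) * (if l = y then 1 else 0) + (-(α * μ t * (C : ℝ)⁻¹)) :=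
          funext hb
        simp only [sfD, hzf]
        refine Finset.sum_congr rfl fun i _ => ?_
        rw [softmax_affine y i, TCLM_apply, hSdef]
      rw [integral_congr_ae h1]
      have hterm_int : ∀ i : Fin C, Integrable (fun b =>
          ((if i = y then Real.exp (α * μ t) else 1) / S - if i = y then 1 else 0)
            • TCLM i (v y b)) π := fun i => by
        exact ((TCLM i).integrable_comp (hvint y)).smul
          (((if i = y then Real.exp (α * μ t) else 1) / S - if i = y then 1 else 0) : ℝ)
      rw [integral_finset_sum _ fun i _ => hterm_int i]
      refine Finset.sum_congr rfl fun i _ => ?_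
      rw [integral_smul, ContinuousLinearMap.integral_comp_comm _ (hvint y), hvmean y,
        ContinuousLinearMap.map_smul, TCLM_apply, smul_smul, mul_comm α]
    -- total derivative of L
    have hLfun : L = fun W : PiLp 2 fun _ : Fin C => EuclideanSpace ℝ (Fin d) =>
        (C : ℝ)⁻¹ * ∑ y, ∫ b, -Real.log (softmax (fun i => ⟪W i, v y b⟫) y) ∂π := by
      funext W; exact hL W
    rw [hLfun]
    have hder := HasFDerivAt.const_mul
      (HasFDerivAt.fun_sum fun y (_ : y ∈ Finset.univ) => hasfd y) ((C : ℝ)⁻¹)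
    have hCne : ((C : ℝ)) ≠ 0 := by positivity
    have heq : (InnerProductSpace.toDual ℝ
          (PiLp 2 fun _ : Fin C => EuclideanSpace ℝ (Fin d))) ((-(α / S)) • D)
        = (C : ℝ)⁻¹ • ∑ y, ∫ b, sfD (v y b) y W₀ ∂π := by
      rw [Finset.sum_congr rfl fun y _ => hAy y]
      apply ContinuousLinearMap.ext
      intro U
      rw [InnerProductSpace.toDual_apply_apply, PiLp.inner_apply]
      simp only [ContinuousLinearMap.smul_apply, ContinuousLinearMap.coe_sum',
        Finset.sum_apply, ContinuousLinearMap.coe_smul', Pi.smul_apply, phiCLM_apply,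
        smul_eq_mul]
      rw [Finset.sum_comm, Finset.mul_sum]
      refine Finset.sum_congr rfl fun i _ => ?_
      have hDi : ((-(α / S)) • D) i = (-(α / S)) • D i := rfl
      rw [hDi, hD i]
      rw [real_inner_smul_left, inner_sub_left, real_inner_smul_left, sum_inner]
      have hcoef : ∀ y : Fin C,
          ((if i = y then Real.exp (α * μ t) else 1) / S - if i = y then 1 else 0) * α
          = α / S + (if i = y then -((C : ℝ) * α / S) else 0) := by
        intro y
        split_ifs with h
        · rw [div_sub_one hS0.ne', div_mul_eq_mul_div, hSdef]; ring
        · simp [div_eq_mul_inv, mul_comm]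
      simp only [hcoef, add_mul, ite_mul, zero_mul]
      rw [Finset.sum_add_distrib, Finset.sum_ite_eq Finset.univ i
        (fun y => -((C : ℝ) * α / S) * ⟪s y, U i⟫), if_pos (Finset.mem_univ i)]
      rw [← Finset.mul_sum]
      have hCC : (C : ℝ)⁻¹ * (C : ℝ) = 1 := inv_mul_cancel₀ hCne
      linear_combination (α / S * ⟪s i, U i⟫) * hCC
    rw [heq]
    exact hder
  · -- derivative of trajectory
    have h1 := (hμ t ht).smul_const D
    rw [neg_smul, neg_neg]
    exact h1
  · intro k
    have hk : W₀ k = μ t • D k := rfl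
    rw [hk, hD k]
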